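/- arXiv:2004.03944 — 2 statements merged into one kernel-verified Lean document; each statement's English description precedes it below -/
import Mathlib

section
/- Define φ(m) = ⌊(5m−5)/6⌋ for 1 ≤ m ≤ 3 and φ(m) = ⌊(5m−5)/6⌋ − 1 for m ≥ 4, and define θ(r) = ⌊(5r−5)/6⌋ for 1 ≤ r ≤ 2 and θ(r) = ⌊(5r−5)/6⌋ − 1 for r ≥ 3. Then for all integers m ≥ 5 and r ≥ ⌈(m+2)/5⌉, φ(m) + ⌊(5r−m−2)/6⌋ ≥ θ(r) + 1. -/
/-- φ(m) = ⌊(5m−5)/6⌋ for 1 ≤ m ≤ 3, and ⌊(5m−5)/6⌋ − 1 for m ≥ 4. -/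
noncomputable def φ (m : ℤ) : ℤ :=
  if m ≤ 3 then ⌊(5 * (m : ℚ) - 5) / 6⌋ else ⌊(5 * (m : ℚ) - 5) / 6⌋ - 1

/-- θ(r) = ⌊(5r−5)/6⌋ for 1 ≤ r ≤ 2, and ⌊(5r−5)/6⌋ − 1 for r ≥ 3. -/
noncomputable def θ (r : ℤ) : ℤ :=
  if r ≤ 2 then ⌊(5 * (r : ℚ) - 5) / 6⌋ else ⌊(5 * (r : ℚ) - 5) / 6⌋ - 1

/-- For all integers m ≥ 5 and r ≥ ⌈(m+2)/5⌉, φ(m) + ⌊(5r−m−2)/6⌋ ≥ θ(r) + 1. -/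
theorem stmt14 (m r : ℤ) (hm : 5 ≤ m) (hr : ⌈((m : ℚ) + 2) / 5⌉ ≤ r) :
    φ m + ⌊(5 * (r : ℚ) - m - 2) / 6⌋ ≥ θ r + 1 := by
  rw [Int.ceil_le, div_le_iff₀ (by norm_num)] at hr
  have hr' : m + 2 ≤ r * 5 := by exact_mod_cast hr
  have e1 : (5 * (m : ℚ) - 5) = ((5 * m - 5 : ℤ) : ℚ) := by push_cast; ring
  have e2 : (5 * (r : ℚ) - 5) = ((5 * r - 5 : ℤ) : ℚ) := by push_cast; ring
  have e3 : (5 * (r : ℚ) - m - 2) = ((5 * r - m - 2 : ℤ) : ℚ) := by push_cast; ring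
  have h6 : ((6 : ℚ)) = ((6 : ℕ) : ℚ) := by norm_num
  unfold φ θ
  rw [e1, e2, e3, h6, Rat.floor_intCast_div_natCast, Rat.floor_intCast_div_natCast,
    Rat.floor_intCast_div_natCast]
  omega
end

section
/- Let Z(q) = q^2 · ∏_{m≥1}(1 − q^(50m))/(1 − q^(2m)) and for α ≥ 1 define L_{2α} = ∏_{m≥1}(1 − q^(2m)) · ∑_{n≥0} c(5^(2α)·n + λ_{2α}) q^(n+1), where c and λ_{2α} are as in the paper. Then U_5(Z · L_{2α}) = ∏_{m≥1}(1 − q^(10m)) · ∑_{n≥0} c(5^(2α+1)·n + λ_{2α+1}) q^(n+1), where λ_{2α+1} = (1 + 7·5^(2α+1))/12 and U_5(∑ a(m) q^m) = ∑ a(5m) q^m. -/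
open PowerSeries

noncomputable section

/-- Infinite product ∏_{m≥1} f m of factors with f m = 1 + O(q^m), defined coefficientwise. -/
def seqProd (f : ℕ → PowerSeries ℚ) : PowerSeries ℚ :=
  PowerSeries.mk fun n => coeff n (∏ m ∈ Finset.range (n + 1), f (m + 1))

/-- Infinite sum ∑_{m≥1} f m of terms with f m = O(q^m), defined coefficientwise. -/
def seqSum (f : ℕ → PowerSeries ℚ) : PowerSeries ℚ :=
  PowerSeries.mk fun n => coeff n (∑ m ∈ Finset.range (n + 1), f (m + 1))

/-- E_2(q) = 1 − 24 ∑_{n≥1} n q^n/(1−q^n). -/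
def E2 : PowerSeries ℚ :=
  1 - 24 * seqSum fun n => (n : ℚ) • (X ^ n * (1 - X ^ n)⁻¹)

/-- The substitution q ↦ q^2: (expand2 f)(q) = f(q^2). -/
def expand2 (f : PowerSeries ℚ) : PowerSeries ℚ :=
  PowerSeries.mk fun n => if 2 ∣ n then coeff (n / 2) f else 0

/-- c(n), defined by ∑_{n≥0} c(n) q^n = (2E_2(q^2) − E_2(q)) / ∏_{m≥1}(1 − q^(2m)). -/
def c (n : ℕ) : ℚ :=
  coeff n ((2 * expand2 E2 - E2) * (seqProd fun m => 1 - X ^ (2 * m))⁻¹)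

/-- The U_5 operator: U_5(∑ a(m) q^m) = ∑ a(5m) q^m. -/
def U5 (f : PowerSeries ℚ) : PowerSeries ℚ :=
  PowerSeries.mk fun m => coeff (5 * m) f

/-- Z(q) = q^2 ∏_{m≥1}(1 − q^(50m))/(1 − q^(2m)), the eta quotient η(50τ)/η(2τ). -/
def Zq : PowerSeries ℚ :=
  X ^ 2 * (seqProd fun m => 1 - X ^ (50 * m)) * (seqProd fun m => 1 - X ^ (2 * m))⁻¹

/-! ### Auxiliary lemmas -/

lemma coeff_mul_one_sub_X_pow (g : PowerSeries ℚ) (cc k : ℕ) :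
    coeff k (g * (1 - X ^ cc)) =
    coeff k g - if cc ≤ k then coeff (k - cc) g else 0 := by
  rw [mul_sub, mul_one, map_sub, coeff_mul_X_pow']

lemma coeff_mul_one_sub_X_pow_of_lt (g : PowerSeries ℚ) (cc k : ℕ) (h : k < cc) :
    coeff k (g * (1 - X ^ cc)) = coeff k g := by
  rw [coeff_mul_one_sub_X_pow, if_neg (by omega), sub_zero]

/-- Stability of coefficients of the partial products. -/
lemma prod_stable (a N N' k : ℕ) (hN : N' ≤ N) (hk : k < a * (N' + 1)) :
    coeff (R := ℚ) k (∏ m ∈ Finset.range N, (1 - X ^ (a * (m + 1)))) =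
    coeff (R := ℚ) k (∏ m ∈ Finset.range N', (1 - X ^ (a * (m + 1)))) := by
  induction N, hN using Nat.le_induction with
  | base => rfl
  | succ n hn ih =>
    rw [Finset.prod_range_succ, coeff_mul_one_sub_X_pow_of_lt _ _ _
      (lt_of_lt_of_le hk (Nat.mul_le_mul_left a (by omega))), ih]

/-- Coefficients of products of factors with exponents divisible by 5. -/
lemma coeff_prod_pow5 (s : Finset ℕ) (cf : ℕ → ℕ) (n : ℕ) :
    coeff (R := ℚ) n (∏ m ∈ s, (1 - X ^ (5 * cf m))) =
    if 5 ∣ n then coeff (R := ℚ) (n / 5) (∏ m ∈ s, (1 - X ^ (cf m))) else 0 := by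
  induction s using Finset.induction_on generalizing n with
  | empty =>
    simp only [Finset.prod_empty, coeff_one]
    rcases Nat.eq_zero_or_pos n with h | h
    · subst h; simp
    · rw [if_neg (by omega)]
      by_cases hd : 5 ∣ n
      · rw [if_pos hd, if_neg (by omega)]
      · rw [if_neg hd]
  | @insert a s' ha ih =>
    rw [Finset.prod_insert ha, Finset.prod_insert ha,
      mul_comm ((1 : PowerSeries ℚ) - X ^ (5 * cf a)),
      mul_comm ((1 : PowerSeries ℚ) - X ^ cf a),
      coeff_mul_one_sub_X_pow, ih]
    by_cases hd : 5 ∣ n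
    · obtain ⟨r, rfl⟩ := hd
      have h5 : (5 : ℕ) ∣ 5 * r := ⟨r, rfl⟩
      rw [if_pos h5, if_pos h5, coeff_mul_one_sub_X_pow,
        Nat.mul_div_cancel_left r (by norm_num)]
      by_cases hc : cf a ≤ r
      · rw [if_pos (by omega : 5 * cf a ≤ 5 * r), if_pos hc, ih (5 * r - 5 * cf a),
          if_pos (Nat.dvd_sub (Dvd.intro r rfl) (Dvd.intro (cf a) rfl) :
            (5 : ℕ) ∣ 5 * r - 5 * cf a)]
        have e : (5 * r - 5 * cf a) / 5 = r - cf a := by omega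
        rw [e]
      · rw [if_neg (by omega : ¬ 5 * cf a ≤ 5 * r), if_neg hc]
    · rw [if_neg hd, if_neg hd]
      by_cases hc : 5 * cf a ≤ n
      · rw [if_pos hc, ih (n - 5 * cf a),
          if_neg (by omega : ¬ (5 : ℕ) ∣ n - 5 * cf a), sub_zero]
      · rw [if_neg hc, sub_zero]

/-- Substitution q ↦ q^5, coefficientwise. -/
def E5 (g : PowerSeries ℚ) : PowerSeries ℚ :=
  PowerSeries.mk fun n => if 5 ∣ n then coeff (n / 5) g else 0

lemma P50_eq_E5_P10 :
    (seqProd fun m => 1 - X ^ (50 * m)) = E5 (seqProd fun m => 1 - X ^ (10 * m)) := by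
  ext n
  rw [E5, coeff_mk, seqProd, coeff_mk]
  have h1 : (∏ m ∈ Finset.range (n + 1), ((1 : PowerSeries ℚ) - X ^ (50 * (m + 1))))
      = ∏ m ∈ Finset.range (n + 1), (1 - X ^ (5 * (10 * (m + 1)))) := by
    apply Finset.prod_congr rfl
    intro m _
    congr 2
    ring
  rw [h1, coeff_prod_pow5]
  by_cases hd : 5 ∣ n
  · rw [if_pos hd, if_pos hd, seqProd, coeff_mk]
    have hN : n / 5 + 1 ≤ n + 1 := by omega
    have hk : n / 5 < 10 * (n / 5 + 1 + 1) := by omega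
    exact prod_stable 10 (n + 1) (n / 5 + 1) (n / 5) hN hk
  · rw [if_neg hd, if_neg hd]

/-- The key U₅ identity: U₅(g(q⁵)·f(q)) = g(q)·U₅(f). -/
lemma U5_E5_mul (g f : PowerSeries ℚ) : U5 (E5 g * f) = g * U5 f := by
  ext m
  rw [U5, coeff_mk, coeff_mul, coeff_mul, Finset.Nat.sum_antidiagonal_eq_sum_range_succ_mk,
    Finset.Nat.sum_antidiagonal_eq_sum_range_succ_mk]
  symm
  calc ∑ s ∈ Finset.range (m + 1), coeff s g * coeff (m - s) (U5 f)
      = ∑ s ∈ Finset.range (m + 1),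
          coeff (5 * s) (E5 g) * coeff (5 * m - 5 * s) f := by
        apply Finset.sum_congr rfl
        intro s hs
        simp only [Finset.mem_range] at hs
        simp only [E5, U5, coeff_mk]
        rw [if_pos ⟨s, rfl⟩, Nat.mul_div_cancel_left s (by norm_num)]
        have e : 5 * (m - s) = 5 * m - 5 * s := by omega
        rw [e]
    _ = ∑ i ∈ Finset.image (fun s => 5 * s) (Finset.range (m + 1)),
          coeff i (E5 g) * coeff (5 * m - i) f :=
        by
          symm
          apply Finset.sum_image
          intro x _ y _ h
          simp only at h
          omega
    _ = ∑ i ∈ Finset.range (5 * m + 1), coeff i (E5 g) * coeff (5 * m - i) f := by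
        apply Finset.sum_subset
        · intro i hi
          simp only [Finset.mem_image, Finset.mem_range] at hi ⊢
          obtain ⟨s, hs, rfl⟩ := hi
          omega
        · intro i hi hni
          simp only [Finset.mem_image, Finset.mem_range] at hi hni
          have hnd : ¬ (5 ∣ i) := by
            rintro ⟨s, rfl⟩
            exact hni ⟨s, by omega, by ring⟩
          rw [E5, coeff_mk, if_neg hnd, zero_mul]
    _ = ∑ i ∈ Finset.range (5 * m).succ, coeff i (E5 g) * coeff (5 * m - i) f := rfl

lemma pow5_mod12 (α : ℕ) : ∃ w, 5 ^ (2 * α) = 12 * w + 1 := by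
  induction α with
  | zero => exact ⟨0, rfl⟩
  | succ n ih =>
    obtain ⟨w, hw⟩ := ih
    refine ⟨25 * w + 2, ?_⟩
    have h : 2 * (n + 1) = 2 * n + 2 := by ring
    rw [h, pow_add, hw]
    ring

lemma key_arith (α u : ℕ) :
    5 ^ (2 * α) * (5 * u + 2) + (1 + 11 * 5 ^ (2 * α)) / 12 =
    5 ^ (2 * α + 1) * u + (1 + 7 * 5 ^ (2 * α + 1)) / 12 := by
  obtain ⟨w, hw⟩ := pow5_mod12 α
  rw [pow_succ, hw]
  have h1 : (1 + 11 * (12 * w + 1)) / 12 = 11 * w + 1 := by omega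
  have h2 : (1 + 7 * ((12 * w + 1) * 5)) / 12 = 35 * w + 3 := by omega
  rw [h1, h2]
  ring

/-- For α ≥ 1, with L_{2α} = ∏_{m≥1}(1 − q^(2m)) · ∑_{n≥0} c(5^(2α)n + λ_{2α}) q^(n+1),
λ_{2α} = (1 + 11·5^(2α))/12, λ_{2α+1} = (1 + 7·5^(2α+1))/12:
U_5(Z · L_{2α}) = ∏_{m≥1}(1 − q^(10m)) · ∑_{n≥0} c(5^(2α+1)n + λ_{2α+1}) q^(n+1). -/
theorem stmt18 (α : ℕ) (hα : 1 ≤ α) :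
    U5 (Zq * ((seqProd fun m => 1 - X ^ (2 * m)) *
        PowerSeries.mk fun k =>
          if k = 0 then 0 else c (5 ^ (2 * α) * (k - 1) + (1 + 11 * 5 ^ (2 * α)) / 12)))
      = (seqProd fun m => 1 - X ^ (10 * m)) *
        PowerSeries.mk fun k =>
          if k = 0 then 0 else c (5 ^ (2 * α + 1) * (k - 1) + (1 + 7 * 5 ^ (2 * α + 1)) / 12) := by
  have hP2 : (seqProd fun m => 1 - X ^ (2 * m))⁻¹ * (seqProd fun m => 1 - X ^ (2 * m)) = 1 := by
    apply PowerSeries.inv_mul_cancel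
    rw [← coeff_zero_eq_constantCoeff_apply, seqProd, coeff_mk, Finset.prod_range_one]
    simp
  have h2 : U5 ((PowerSeries.mk fun k =>
        if k = 0 then 0 else c (5 ^ (2 * α) * (k - 1) + (1 + 11 * 5 ^ (2 * α)) / 12)) * X ^ 2)
      = PowerSeries.mk fun k =>
        if k = 0 then 0 else c (5 ^ (2 * α + 1) * (k - 1) + (1 + 7 * 5 ^ (2 * α + 1)) / 12) := by
    ext t
    rw [U5, coeff_mk, coeff_mul_X_pow', coeff_mk, coeff_mk]
    match t with
    | 0 => simp
    | u + 1 =>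
      rw [if_pos (by omega : 2 ≤ 5 * (u + 1)),
        if_neg (by omega : ¬ (5 * (u + 1) - 2 = 0)),
        if_neg (by omega : ¬ (u + 1 = 0))]
      have e1 : 5 * (u + 1) - 2 - 1 = 5 * u + 2 := by omega
      have e2 : u + 1 - 1 = u := by omega
      rw [e1, e2]
      exact congrArg c (key_arith α u)
  have h1 : Zq * ((seqProd fun m => 1 - X ^ (2 * m)) *
        PowerSeries.mk fun k =>
          if k = 0 then 0 else c (5 ^ (2 * α) * (k - 1) + (1 + 11 * 5 ^ (2 * α)) / 12))
      = E5 (seqProd fun m => 1 - X ^ (10 * m)) *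
        ((PowerSeries.mk fun k =>
          if k = 0 then 0 else c (5 ^ (2 * α) * (k - 1) + (1 + 11 * 5 ^ (2 * α)) / 12)) * X ^ 2) := by
    rw [Zq, P50_eq_E5_P10]
    generalize (PowerSeries.mk fun k =>
      if k = 0 then 0 else c (5 ^ (2 * α) * (k - 1) + (1 + 11 * 5 ^ (2 * α)) / 12)) = M
    calc X ^ 2 * E5 (seqProd fun m => 1 - X ^ (10 * m)) *
          (seqProd fun m => 1 - X ^ (2 * m))⁻¹ * ((seqProd fun m => 1 - X ^ (2 * m)) * M)
        = E5 (seqProd fun m => 1 - X ^ (10 * m)) * (M * X ^ 2) *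
            ((seqProd fun m => 1 - X ^ (2 * m))⁻¹ * (seqProd fun m => 1 - X ^ (2 * m))) := by
          ring
      _ = E5 (seqProd fun m => 1 - X ^ (10 * m)) * (M * X ^ 2) := by
          rw [hP2, mul_one]
  rw [h1, U5_E5_mul, h2]

end
end
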